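/- The set X = {⟨x,y,z⟩ : x^{q+1} = yz^q + zy^q, (x,y,z) ≠ 0} of 1-dimensional subspaces of F_{q^2}^3 spanned by nonzero isotropic vectors of the Hermitian form β has exactly q^3 + 1 elements. -/

import Mathlib

open Polynomial

section helpers

variable {K : Type} [Field K] [Fintype K]

/-- Root-counting helper: the set of `y` with `y ^ q = c * y` has at most `q` elements. -/
lemma card_pow_eq_mul_le (q : ℕ) (hq : 1 < q) (c : K) :
    Nat.card {y : K // y ^ q = c * y} ≤ q := by
  classical
  set P : K[X] := X ^ q - C c * X with hP
  have hdeg : P.degree = q := by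
    have h1 : (C c * X : K[X]).degree < (X ^ q : K[X]).degree := by
      calc (C c * X : K[X]).degree ≤ 1 := degree_C_mul_X_le c
        _ < (q : WithBot ℕ) := by exact_mod_cast hq
        _ = (X ^ q : K[X]).degree := by simp [degree_X_pow]
    rw [hP, sub_eq_add_neg, degree_add_eq_left_of_degree_lt (by rw [degree_neg]; exact h1), degree_X_pow]
  have hP0 : P ≠ 0 := fun h => by rw [h] at hdeg; simp at hdeg
  have hnat : P.natDegree = q := natDegree_eq_of_degree_eq_some hdeg
  have hsub : {y : K | y ^ q = c * y} ⊆ ↑P.roots.toFinset := by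
    intro y hy
    simp only [Multiset.mem_toFinset, Finset.coe_sort_coe, Finset.mem_coe]
    rw [mem_roots hP0]
    simp only [IsRoot, hP, eval_sub, eval_pow, eval_X, eval_mul, eval_C]
    rw [Set.mem_setOf_eq] at hy
    rw [hy, sub_self]
  calc Nat.card {y : K // y ^ q = c * y} = Set.ncard {y : K | y ^ q = c * y} := by
        exact (Nat.card_coe_set_eq _).symm ▸ rfl
    _ ≤ Set.ncard (↑P.roots.toFinset : Set K) := Set.ncard_le_ncard hsub (Set.toFinite _)
    _ = P.roots.toFinset.card := by simp [Set.ncard_coe_finset]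
    _ ≤ Multiset.card P.roots := Multiset.toFinset_card_le _
    _ ≤ P.natDegree := card_roots' P
    _ = q := hnat


lemma charp_of_card (p e q : ℕ) (hp : p.Prime) (he : 0 < e) (hq : q = p ^ e)
    (hcard : Fintype.card K = q ^ 2) : CharP K p := by
  obtain ⟨n, hr, hc⟩ := FiniteField.card K (ringChar K)
  have hpr : p = ringChar K := by
    have hdvd : p ∣ (ringChar K) ^ (n : ℕ) := by
      rw [← hc, hcard, hq, ← pow_mul]
      exact dvd_pow_self p (by positivity)
    exact (Nat.prime_dvd_prime_iff_eq hp hr).mp (hp.dvd_of_dvd_pow hdvd)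
  rw [hpr]; exact ringChar.charP K

lemma card_pairs (p e q : ℕ) (hp : p.Prime) (he : 0 < e) (hq : q = p ^ e)
    (hcard : Fintype.card K = q ^ 2) :
    Nat.card {xy : K × K // xy.1 ^ (q + 1) = xy.2 + xy.2 ^ q} = q ^ 3 := by
  classical
  haveI := charp_of_card p e q hp he hq hcard
  haveI : Fact p.Prime := ⟨hp⟩
  have hq1 : 1 < q := hq ▸ Nat.one_lt_pow he.ne' hp.one_lt
  have frob : ∀ a b : K, (a + b) ^ q = a ^ q + b ^ q := by
    subst hq; intro a b; exact add_pow_char_pow a b p e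
  have hKq : ∀ a : K, (a ^ q) ^ q = a := fun a => by
    rw [← pow_mul, ← sq, ← hcard]; exact FiniteField.pow_card a
  set f : K →+ K :=
    { toFun := fun y => y + y ^ q
      map_zero' := by simp [zero_pow (by omega : q ≠ 0)]
      map_add' := fun a b => by show (a+b)+(a+b)^q = (a + a^q) + (b + b^q); rw [frob]; ring } with hf
  have hfy : ∀ y : K, f y = y + y ^ q := fun y => rfl
  have hker_le : Nat.card f.ker ≤ q := by
    refine le_trans (le_of_eq (Nat.card_congr (Equiv.subtypeEquivRight fun y => ?_)))
      (card_pow_eq_mul_le q hq1 (-1 : K))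
    simp only [AddMonoidHom.mem_ker, hfy]
    constructor
    · intro h; rw [neg_one_mul]; linear_combination h
    · intro h; rw [neg_one_mul] at h; linear_combination h
  have hsub : (f.range : Set K) ⊆ {c : K | c ^ q = 1 * c} := by
    rintro c ⟨y, rfl⟩
    simp only [Set.mem_setOf_eq, one_mul, hfy]
    rw [frob, hKq]; ring
  have hrange_le : Nat.card f.range ≤ q := by
    have h1 : Nat.card f.range = (f.range : Set K).ncard := by
      rw [← Nat.card_coe_set_eq]; rfl
    have h2 : Set.ncard {c : K | c ^ q = 1 * c} ≤ q := by
      rw [← Nat.card_coe_set_eq]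
      exact card_pow_eq_mul_le q hq1 (1 : K)
    exact h1 ▸ le_trans (Set.ncard_le_ncard hsub (Set.toFinite _)) h2
  have hmul : Nat.card f.range * Nat.card f.ker = q ^ 2 := by
    have h1 := AddSubgroup.card_eq_card_quotient_mul_card_addSubgroup f.ker
    have h2 : Nat.card (K ⧸ f.ker) = Nat.card f.range :=
      Nat.card_congr (QuotientAddGroup.quotientKerEquivRange f).toEquiv
    rw [h2] at h1
    rw [← h1, Nat.card_eq_fintype_card, hcard]
  have hrq : Nat.card f.range = q := le_antisymm hrange_le (by nlinarith [hmul, hker_le])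
  have hkq : Nat.card f.ker = q := le_antisymm hker_le (by nlinarith [hmul, hrange_le])
  have hrange_eq : (f.range : Set K) = {c : K | c ^ q = 1 * c} := by
    refine Set.eq_of_subset_of_ncard_le hsub ?_ (Set.toFinite _)
    rw [← Nat.card_coe_set_eq, ← Nat.card_coe_set_eq]
    calc Nat.card {c : K | c ^ q = 1 * c} ≤ q := by
          rw [Nat.card_coe_set_eq, ← Nat.card_coe_set_eq]
          exact card_pow_eq_mul_le q hq1 (1 : K)
      _ = Nat.card (f.range : Set K) := by rw [← hrq]; rfl
  have hfiber : ∀ c : K, c ^ q = c → Nat.card {y : K // y + y ^ q = c} = q := by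
    intro c hc
    have hcmem : c ∈ (f.range : Set K) := by
      rw [hrange_eq]; simpa using hc
    obtain ⟨y₀, hy₀⟩ := hcmem
    have e : {y : K // y + y ^ q = c} ≃ f.ker :=
      { toFun := fun y => ⟨y.1 - y₀, by
          rw [AddMonoidHom.mem_ker, map_sub, hy₀, hfy, y.2, sub_self]⟩
        invFun := fun k => ⟨k.1 + y₀, by
          have hk : k.1 + k.1 ^ q = 0 := k.2
          rw [frob]
          have : y₀ + y₀ ^ q = c := hy₀
          linear_combination hk + this⟩
        left_inv := fun y => by simp
        right_inv := fun k => by simp }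
    rw [Nat.card_congr e, hkq]
  have e1 : {xy : K × K // xy.1 ^ (q + 1) = xy.2 + xy.2 ^ q} ≃
      Σ x : K, {y : K // y + y ^ q = x ^ (q + 1)} :=
    { toFun := fun v => ⟨v.1.1, v.1.2, v.2.symm⟩
      invFun := fun s => ⟨(s.1, s.2.1), s.2.2.symm⟩
      left_inv := fun v => rfl
      right_inv := fun s => rfl }
  rw [Nat.card_congr e1, Nat.card_eq_fintype_card, Fintype.card_sigma]
  have hx : ∀ x : K, Fintype.card {y : K // y + y ^ q = x ^ (q + 1)} = q := by
    intro x
    rw [← Nat.card_eq_fintype_card]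
    refine hfiber _ ?_
    have : x ^ (q + 1) = x ^ q * x := by rw [pow_succ]
    rw [this, mul_pow, hKq, mul_comm]
  simp only [hx, Finset.sum_const, Finset.card_univ, hcard, smul_eq_mul]
  ring

end helpers

/-- The Hermitian form `β(u,v) = -x₁x₂^q + y₁z₂^q + z₁y₂^q` on `F_{q²}³`. -/
def herm {K : Type*} [Field K] (q : ℕ) (u v : Fin 3 → K) : K :=
  -(u 0 * v 0 ^ q) + u 1 * v 2 ^ q + u 2 * v 1 ^ q

/-- The set of absolute points (1-dimensional subspaces of `F_{q²}³` spanned by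
nonzero isotropic vectors) has exactly `q³ + 1` elements. -/
theorem card_absolute_points
    (p e q : ℕ) (hp : p.Prime) (he : 0 < e) (hq : q = p ^ e)
    (K : Type) [Field K] [Fintype K]
    (hcard : Fintype.card K = q ^ 2) :
    Nat.card {W : Submodule K (Fin 3 → K) //
        ∃ u : Fin 3 → K, u ≠ 0 ∧ herm q u u = 0 ∧ W = Submodule.span K {u}}
      = q ^ 3 + 1 := by
  classical
  have hq1 : 1 < q := hq ▸ Nat.one_lt_pow he.ne' hp.one_lt
  -- basic vectors
  have h010 : (![0, 1, 0] : Fin 3 → K) ≠ 0 := fun h => one_ne_zero (congrFun h 1)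
  have h010herm : herm q (![0, 1, 0] : Fin 3 → K) ![0, 1, 0] = 0 := by
    simp [herm, zero_pow (by omega : q ≠ 0)]
  have hv : ∀ x y : K, (![x, y, 1] : Fin 3 → K) ≠ 0 := fun x y h =>
    one_ne_zero (congrFun h 2)
  have hvherm : ∀ x y : K, x ^ (q + 1) = y + y ^ q →
      herm q (![x, y, 1] : Fin 3 → K) ![x, y, 1] = 0 := by
    intro x y h
    simp only [herm, Matrix.cons_val_zero, Matrix.cons_val_one, Matrix.head_cons,
      Matrix.cons_val_two, Matrix.tail_cons, one_pow, mul_one, one_mul]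
    rw [pow_succ] at h
    linear_combination -h
  -- the map
  set P := {xy : K × K // xy.1 ^ (q + 1) = xy.2 + xy.2 ^ q} with hP
  set S := {W : Submodule K (Fin 3 → K) //
      ∃ u : Fin 3 → K, u ≠ 0 ∧ herm q u u = 0 ∧ W = Submodule.span K {u}} with hS
  let Φ : Option P → S := fun o =>
    match o with
    | none => ⟨Submodule.span K {![0, 1, 0]}, ![0, 1, 0], h010, h010herm, rfl⟩
    | some xy => ⟨Submodule.span K {![xy.1.1, xy.1.2, 1]}, ![xy.1.1, xy.1.2, 1],
        hv _ _, hvherm _ _ xy.2, rfl⟩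
  have hinj : Function.Injective Φ := by
    rintro (_ | ⟨⟨⟨x, y⟩, hxy⟩⟩) (_ | ⟨⟨⟨x', y'⟩, hxy'⟩⟩) h
    · rfl
    · exfalso
      have : Submodule.span K {(![0, 1, 0] : Fin 3 → K)} =
          Submodule.span K {(![x', y', 1] : Fin 3 → K)} := congrArg Subtype.val h
      obtain ⟨z, hz⟩ := Submodule.span_singleton_eq_span_singleton.mp this
      have := congrFun hz 2
      simp [Units.smul_def] at this
    · exfalso
      have : Submodule.span K {(![x, y, 1] : Fin 3 → K)} =
          Submodule.span K {(![0, 1, 0] : Fin 3 → K)} := congrArg Subtype.val h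
      obtain ⟨z, hz⟩ := Submodule.span_singleton_eq_span_singleton.mp this
      have := congrFun hz 2
      simp [Units.smul_def] at this
    · have heq : Submodule.span K {(![x, y, 1] : Fin 3 → K)} =
          Submodule.span K {(![x', y', 1] : Fin 3 → K)} := congrArg Subtype.val h
      obtain ⟨z, hz⟩ := Submodule.span_singleton_eq_span_singleton.mp heq
      have hz2 := congrFun hz 2
      simp [Units.smul_def] at hz2
      have hz0 := congrFun hz 0
      have hz1 := congrFun hz 1
      simp [Units.smul_def, hz2] at hz0 hz1
      exact congrArg some (Subtype.ext (show (x,y) = (x',y') from Prod.ext hz0 hz1))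
  have hsurj : Function.Surjective Φ := by
    rintro ⟨W, u, hu0, huh, rfl⟩
    by_cases h2 : u 2 = 0
    · -- u = u 1 • ![0,1,0]
      have h0 : u 0 = 0 := by
        have : -(u 0 * u 0 ^ q) + u 1 * u 2 ^ q + u 2 * u 1 ^ q = 0 := huh
        rw [h2, zero_pow (by omega : q ≠ 0)] at this
        have h00 : u 0 * u 0 ^ q = 0 := by linear_combination -this
        rcases mul_eq_zero.mp h00 with h | h
        · exact h
        · exact pow_eq_zero_iff (by omega : q ≠ 0) |>.mp h
      have h1 : u 1 ≠ 0 := by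
        intro h1
        apply hu0
        funext i
        fin_cases i <;> simp [h0, h1, h2]
      refine ⟨none, Subtype.ext ?_⟩
      show Submodule.span K {![0, 1, 0]} = Submodule.span K {u}
      rw [Submodule.span_singleton_eq_span_singleton]
      refine ⟨Units.mk0 (u 1) h1, ?_⟩
      funext i
      fin_cases i <;> simp [Units.smul_def, h0, h2]
    · -- normalize
      refine ⟨some ⟨((u 2)⁻¹ * u 0, (u 2)⁻¹ * u 1), ?_⟩, ?_⟩
      · have hherm : -(u 0 * u 0 ^ q) + u 1 * u 2 ^ q + u 2 * u 1 ^ q = 0 := huh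
        have h2q : (u 2) ^ q ≠ 0 := pow_ne_zero _ h2
        show ((u 2)⁻¹ * u 0) ^ (q + 1) = (u 2)⁻¹ * u 1 + ((u 2)⁻¹ * u 1) ^ q
        have h1' : (u 2)⁻¹ ^ (q + 1) * u 2 ^ q = (u 2)⁻¹ := by
          rw [pow_succ, mul_right_comm, ← mul_pow, inv_mul_cancel₀ h2, one_pow, one_mul]
        have h2' : (u 2)⁻¹ ^ (q + 1) * u 2 = (u 2)⁻¹ ^ q := by
          rw [pow_succ, mul_assoc, inv_mul_cancel₀ h2, mul_one]
        linear_combination (-((u 2)⁻¹ ^ (q + 1))) * hherm + u 1 * h1' + u 1 ^ q * h2'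
      · refine Subtype.ext ?_
        show Submodule.span K {![(u 2)⁻¹ * u 0, (u 2)⁻¹ * u 1, 1]} = Submodule.span K {u}
        rw [Submodule.span_singleton_eq_span_singleton]
        refine ⟨Units.mk0 (u 2) h2, ?_⟩
        funext i
        fin_cases i <;> simp [Units.smul_def, h2]
  have := Nat.card_congr (Equiv.ofBijective Φ ⟨hinj, hsurj⟩)
  rw [← this, Nat.card_eq_fintype_card, Fintype.card_option, ← Nat.card_eq_fintype_card]
  rw [hP, card_pairs p e q hp he hq hcard]
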